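/- arXiv:2402.14390 — 3 statements merged into one kernel-verified Lean document; each statement's English description precedes it below -/
import Mathlib

section
/- Let p be a positive natural number, Y ∈ (Fin p → ℕ), μ ∈ (Fin p → ℝ), m ∈ (Fin p → ℝ), and let Σ and S be symmetric positive definite real p×p matrices. If the matrix 2·Σ⁻¹ − S⁻¹ is positive definite, then the function v ↦ p_{Σ,μ}(Y, v)² / φ(v; m, S) is Lebesgue-integrable on ℝ^p, i.e. ∫_{ℝ^p} p_{Σ,μ}(Y, v)² / φ(v; m, S) dv < ∞. -/
open MeasureTheory Real Matrix

lemma int1d (a r : ℝ) (ha : 0 < a) :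
    Integrable (fun x : ℝ => Real.exp (-a * x ^ 2 + r * x)) := by
  have h := (integrable_exp_neg_mul_sq ha).comp_sub_right (r / (2 * a))
  have h2 := h.const_mul (Real.exp (r ^ 2 / (4 * a)))
  refine h2.congr (Filter.Eventually.of_forall fun x => ?_)
  show Real.exp _ * Real.exp _ = Real.exp _
  rw [← Real.exp_add]
  congr 1
  field_simp
  ring

lemma quad_lower {p : ℕ} (A : Matrix (Fin p) (Fin p) ℝ) (hA : A.PosDef) :
    ∃ c > 0, ∀ v : Fin p → ℝ, c * ∑ j, v j ^ 2 ≤ v ⬝ᵥ A.mulVec v := by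
  classical
  obtain ⟨B, hBB, hBherm⟩ : ∃ B : Matrix (Fin p) (Fin p) ℝ, B * B = A ∧ B.IsHermitian := by
    open scoped MatrixOrder in
    exact ⟨CFC.sqrt A, CFC.sqrt_mul_sqrt_self A hA.posSemidef.nonneg,
      (CFC.sqrt_nonneg A).posSemidef.isHermitian⟩
  have hdetA : A.det ≠ 0 := hA.det_pos.ne'
  have hdetB : B.det ≠ 0 := by
    intro h
    apply hdetA
    rw [← hBB, Matrix.det_mul, h, mul_zero]
  have hInv : B⁻¹ * B = 1 := Matrix.nonsing_inv_mul B (isUnit_iff_ne_zero.mpr hdetB)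
  set M := ∑ j, ∑ i, (B⁻¹ j i) ^ 2 with hM
  have hM0 : 0 ≤ M := Finset.sum_nonneg fun j _ => Finset.sum_nonneg fun i _ => sq_nonneg _
  refine ⟨(M + 1)⁻¹, inv_pos.mpr (by linarith), fun v => ?_⟩
  have hquad : v ⬝ᵥ A.mulVec v = ∑ i, (B.mulVec v i) ^ 2 := by
    rw [← hBB, ← Matrix.mulVec_mulVec, Matrix.dotProduct_mulVec,
      ← Matrix.mulVec_transpose]
    have : Bᵀ = B := by
      have := hBherm.eq
      rwa [Matrix.conjTranspose_eq_transpose_of_trivial] at this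
    rw [this]
    simp [dotProduct, sq]
  have hquad_nonneg : 0 ≤ v ⬝ᵥ A.mulVec v := by simpa using hA.posSemidef.dotProduct_mulVec_nonneg v
  have hv : ∀ j, v j = ∑ i, B⁻¹ j i * B.mulVec v i := by
    intro j
    have : (B⁻¹).mulVec (B.mulVec v) = v := by
      rw [Matrix.mulVec_mulVec, hInv, Matrix.one_mulVec]
    conv_lhs => rw [← this]
    simp [Matrix.mulVec, dotProduct]
  have hsum : ∑ j, v j ^ 2 ≤ M * (v ⬝ᵥ A.mulVec v) := by
    rw [hquad, hM, Finset.sum_mul]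
    apply Finset.sum_le_sum
    intro j _
    rw [hv j]
    exact Finset.sum_mul_sq_le_sq_mul_sq Finset.univ _ _
  rw [inv_mul_le_iff₀ (by linarith : (0:ℝ) < M + 1)]
  nlinarith [hsum, hquad_nonneg]

lemma integrable_exp_quad {p : ℕ} (A : Matrix (Fin p) (Fin p) ℝ) (hA : A.PosDef)
    (w : Fin p → ℝ) :
    Integrable (fun v : Fin p → ℝ =>
      Real.exp (-(1 / 2) * (v ⬝ᵥ A.mulVec v) + w ⬝ᵥ v)) := by
  obtain ⟨c, hc, hle⟩ := quad_lower A hA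
  have hint : Integrable (fun v : Fin p → ℝ =>
      ∏ j, Real.exp (-(c / 2) * (v j) ^ 2 + w j * v j)) :=
    Integrable.fintype_prod fun j => int1d (c / 2) (w j) (by linarith)
  refine hint.mono' ?_ (Filter.Eventually.of_forall fun v => ?_)
  · apply Continuous.aestronglyMeasurable
    apply Real.continuous_exp.comp
    apply Continuous.add
    · apply Continuous.mul continuous_const
      simp only [dotProduct, Matrix.mulVec]
      fun_prop
    · show Continuous fun v : Fin p → ℝ => ∑ j, w j * v j
      fun_prop
  · rw [Real.norm_eq_abs, abs_of_pos (Real.exp_pos _), ← Real.exp_sum]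
    apply Real.exp_le_exp.mpr
    have h1 : -(1 / 2) * (v ⬝ᵥ A.mulVec v) ≤ -(1/2) * (c * ∑ j, v j ^ 2) := by
      nlinarith [hle v]
    have : w ⬝ᵥ v = ∑ j, w j * v j := rfl
    rw [this]
    have e1 : -(1/2) * (c * ∑ j, v j ^ 2) = ∑ j, -(c / 2) * (v j) ^ 2 := by
      rw [Finset.mul_sum, Finset.mul_sum]
      exact Finset.sum_congr rfl fun j _ => by ring
    rw [Finset.sum_add_distrib]
    linarith

/-- Joint density of the Poisson log-normal model: observed counts `Y` and
latent vector `v`, with latent covariance `Sig` and linear predictor `μ`. -/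
noncomputable def plnDensity (p : ℕ) (Sig : Matrix (Fin p) (Fin p) ℝ)
    (μ : Fin p → ℝ) (Y : Fin p → ℕ) (v : Fin p → ℝ) : ℝ :=
  (2 * Real.pi) ^ (-(p : ℝ) / 2) * Sig.det ^ (-(1 : ℝ) / 2) *
    Real.exp (-(1 / 2) * (v ⬝ᵥ Sig⁻¹.mulVec v)) *
    ∏ j, Real.exp ((Y j : ℝ) * (μ j + v j) - Real.exp (μ j + v j)) /
      (Nat.factorial (Y j) : ℝ)

/-- Gaussian density on `ℝ^p` with mean `m` and covariance `S`. -/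
noncomputable def gaussDensity (p : ℕ) (m : Fin p → ℝ)
    (S : Matrix (Fin p) (Fin p) ℝ) (v : Fin p → ℝ) : ℝ :=
  (2 * Real.pi) ^ (-(p : ℝ) / 2) * S.det ^ (-(1 : ℝ) / 2) *
    Real.exp (-(1 / 2) * ((v - m) ⬝ᵥ S⁻¹.mulVec (v - m)))

theorem pln_is_weights_finite_variance (p : ℕ) (hp : 0 < p)
    (Y : Fin p → ℕ) (μ : Fin p → ℝ) (m : Fin p → ℝ)
    (Sig S : Matrix (Fin p) (Fin p) ℝ)
    (hSig : Sig.PosDef) (hS : S.PosDef)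
    (hcond : ((2 : ℝ) • Sig⁻¹ - S⁻¹).PosDef) :
    Integrable (fun v : Fin p → ℝ =>
      (plnDensity p Sig μ Y v) ^ 2 / gaussDensity p m S v) volume := by
  classical
  set A : Matrix (Fin p) (Fin p) ℝ := (2 : ℝ) • Sig⁻¹ - S⁻¹ with hAdef
  set K1 : ℝ := (2 * Real.pi) ^ (-(p : ℝ) / 2) * Sig.det ^ (-(1 : ℝ) / 2) with hK1
  set K2 : ℝ := (2 * Real.pi) ^ (-(p : ℝ) / 2) * S.det ^ (-(1 : ℝ) / 2) with hK2
  have hK2pos : 0 < K2 :=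
    mul_pos (Real.rpow_pos_of_pos (by positivity) _) (Real.rpow_pos_of_pos hS.det_pos _)
  set w0 : Fin p → ℝ := (-(1/2) : ℝ) • ((S⁻¹ + (S⁻¹)ᵀ) *ᵥ m) with hw0
  set b : Fin p → ℝ := fun j => 2 * (Y j : ℝ) with hb
  set c0 : ℝ := (1/2) * (m ⬝ᵥ S⁻¹ *ᵥ m) with hc0
  set C : ℝ := K1 ^ 2 / K2 * Real.exp (c0 + 2 * ∑ j, (Y j : ℝ) * μ j) with hC
  -- key exponent identity
  have key : ∀ v : Fin p → ℝ,
      -(1/2) * (v ⬝ᵥ A *ᵥ v) + w0 ⬝ᵥ v + c0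
        = -(v ⬝ᵥ Sig⁻¹ *ᵥ v) + (1/2) * ((v - m) ⬝ᵥ S⁻¹ *ᵥ (v - m)) := by
    intro v
    have h1 : v ⬝ᵥ A *ᵥ v = 2 * (v ⬝ᵥ Sig⁻¹ *ᵥ v) - v ⬝ᵥ S⁻¹ *ᵥ v := by
      rw [hAdef, Matrix.sub_mulVec, dotProduct_sub, Matrix.smul_mulVec,
        dotProduct_smul, smul_eq_mul]
    have h2 : (v - m) ⬝ᵥ S⁻¹ *ᵥ (v - m) =
        v ⬝ᵥ S⁻¹ *ᵥ v - v ⬝ᵥ S⁻¹ *ᵥ m - m ⬝ᵥ S⁻¹ *ᵥ v + m ⬝ᵥ S⁻¹ *ᵥ m := by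
      rw [Matrix.mulVec_sub, sub_dotProduct, dotProduct_sub,
        dotProduct_sub]
      ring
    have h3 : w0 ⬝ᵥ v = -(1/2) * (v ⬝ᵥ S⁻¹ *ᵥ m + m ⬝ᵥ S⁻¹ *ᵥ v) := by
      rw [hw0, smul_dotProduct, Matrix.add_mulVec, add_dotProduct, smul_eq_mul,
        dotProduct_comm (S⁻¹ *ᵥ m) v, Matrix.mulVec_transpose,
        ← Matrix.dotProduct_mulVec]
    rw [h1, h2, h3, hc0]
    ring
  -- positivity and continuity facts
  have hgpos : ∀ v, 0 < gaussDensity p m S v := fun v => mul_pos hK2pos (Real.exp_pos _)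
  have hqc : ∀ (M : Matrix (Fin p) (Fin p) ℝ), Continuous fun v : Fin p → ℝ => v ⬝ᵥ M.mulVec v := by
    intro M; simp only [dotProduct, Matrix.mulVec]; fun_prop
  have hplncont : Continuous (plnDensity p Sig μ Y) := by
    unfold plnDensity
    refine Continuous.mul (Continuous.mul continuous_const ?_) ?_
    · exact Real.continuous_exp.comp (continuous_const.mul (hqc Sig⁻¹))
    · refine continuous_finset_prod _ fun j _ => Continuous.div_const ?_ _
      fun_prop
  have hgausscont : Continuous (gaussDensity p m S) := by
    unfold gaussDensity
    refine Continuous.mul continuous_const (Real.continuous_exp.comp ?_)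
    refine continuous_const.mul ?_
    exact (hqc S⁻¹).comp (continuous_id.sub continuous_const)
  have hfm : AEStronglyMeasurable (fun v : Fin p → ℝ =>
      (plnDensity p Sig μ Y v) ^ 2 / gaussDensity p m S v) volume :=
    (((hplncont.pow 2).div hgausscont) fun v => (hgpos v).ne').aestronglyMeasurable
  -- dominating function
  have hint : Integrable (fun v : Fin p → ℝ =>
      C * Real.exp (-(1/2) * (v ⬝ᵥ A *ᵥ v) + (b + w0) ⬝ᵥ v)) :=
    (integrable_exp_quad A hcond (b + w0)).const_mul C
  refine hint.mono' hfm (Filter.Eventually.of_forall fun v => ?_)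
  -- pointwise bound
  have hplnpos : 0 ≤ plnDensity p Sig μ Y v := by
    unfold plnDensity
    have : (0:ℝ) < (2 * Real.pi) ^ (-(p : ℝ) / 2) * Sig.det ^ (-(1 : ℝ) / 2) :=
      mul_pos (Real.rpow_pos_of_pos (by positivity) _) (Real.rpow_pos_of_pos hSig.det_pos _)
    refine mul_nonneg (mul_nonneg this.le (Real.exp_pos _).le) ?_
    exact Finset.prod_nonneg fun j _ => div_nonneg (Real.exp_pos _).le (by positivity)
  rw [Real.norm_eq_abs, abs_of_nonneg (div_nonneg (sq_nonneg _) (hgpos v).le),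
    div_le_iff₀ (hgpos v)]
  -- LHS bound: plnDensity ^ 2 ≤ K1^2 * exp (-q1 + 2 * ∑ Y (μ + v))
  have hprodle : (∏ j, Real.exp ((Y j : ℝ) * (μ j + v j) - Real.exp (μ j + v j)) /
      (Nat.factorial (Y j) : ℝ)) ≤ Real.exp (∑ j, (Y j : ℝ) * (μ j + v j)) := by
    rw [Real.exp_sum]
    refine Finset.prod_le_prod (fun j _ => div_nonneg (Real.exp_pos _).le (by positivity))
      (fun j _ => ?_)
    have hfact : (1:ℝ) ≤ (Nat.factorial (Y j) : ℝ) := by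
      exact_mod_cast Nat.one_le_iff_ne_zero.mpr (Nat.factorial_pos (Y j)).ne'
    calc Real.exp ((Y j : ℝ) * (μ j + v j) - Real.exp (μ j + v j)) / (Nat.factorial (Y j) : ℝ)
        ≤ Real.exp ((Y j : ℝ) * (μ j + v j) - Real.exp (μ j + v j)) :=
          div_le_self (Real.exp_pos _).le hfact
      _ ≤ Real.exp ((Y j : ℝ) * (μ j + v j)) :=
          Real.exp_le_exp.mpr (by linarith [Real.exp_pos (μ j + v j)])
  have hlhs : plnDensity p Sig μ Y v ^ 2
      ≤ K1 ^ 2 * Real.exp (-(v ⬝ᵥ Sig⁻¹ *ᵥ v) + 2 * ∑ j, (Y j : ℝ) * (μ j + v j)) := by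
    unfold plnDensity
    rw [← hK1]
    have hPnn : (0:ℝ) ≤ ∏ j, Real.exp ((Y j : ℝ) * (μ j + v j) - Real.exp (μ j + v j)) /
        (Nat.factorial (Y j) : ℝ) :=
      Finset.prod_nonneg fun j _ => div_nonneg (Real.exp_pos _).le (by positivity)
    have hsq : (K1 * Real.exp (-(1 / 2) * (v ⬝ᵥ Sig⁻¹.mulVec v)) *
        ∏ j, Real.exp ((Y j : ℝ) * (μ j + v j) - Real.exp (μ j + v j)) /
          (Nat.factorial (Y j) : ℝ)) ^ 2
        = K1 ^ 2 * Real.exp (-(1 / 2) * (v ⬝ᵥ Sig⁻¹.mulVec v)) ^ 2 *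
          (∏ j, Real.exp ((Y j : ℝ) * (μ j + v j) - Real.exp (μ j + v j)) /
            (Nat.factorial (Y j) : ℝ)) ^ 2 := by ring
    rw [hsq]
    have hstep : (∏ j, Real.exp ((Y j : ℝ) * (μ j + v j) - Real.exp (μ j + v j)) /
          (Nat.factorial (Y j) : ℝ)) ^ 2
        ≤ Real.exp (∑ j, (Y j : ℝ) * (μ j + v j)) ^ 2 :=
      pow_le_pow_left₀ hPnn hprodle 2
    calc K1 ^ 2 * Real.exp (-(1 / 2) * (v ⬝ᵥ Sig⁻¹.mulVec v)) ^ 2 *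
          (∏ j, Real.exp ((Y j : ℝ) * (μ j + v j) - Real.exp (μ j + v j)) /
            (Nat.factorial (Y j) : ℝ)) ^ 2
        ≤ K1 ^ 2 * Real.exp (-(1 / 2) * (v ⬝ᵥ Sig⁻¹.mulVec v)) ^ 2 *
          Real.exp (∑ j, (Y j : ℝ) * (μ j + v j)) ^ 2 := by
          refine mul_le_mul_of_nonneg_left hstep (by positivity)
      _ = K1 ^ 2 * Real.exp (-(v ⬝ᵥ Sig⁻¹ *ᵥ v) + 2 * ∑ j, (Y j : ℝ) * (μ j + v j)) := by
          rw [← Real.exp_nat_mul, ← Real.exp_nat_mul, mul_assoc, ← Real.exp_add]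
          congr 2
          push_cast
          ring
  refine hlhs.trans (le_of_eq ?_)
  -- RHS equality
  unfold gaussDensity
  rw [← hK2, hC]
  have hbv : b ⬝ᵥ v = ∑ j, 2 * (Y j : ℝ) * v j := rfl
  have hwsum : (b + w0) ⬝ᵥ v = b ⬝ᵥ v + w0 ⬝ᵥ v := add_dotProduct _ _ _
  have hexp : -(v ⬝ᵥ Sig⁻¹ *ᵥ v) + 2 * ∑ j, (Y j : ℝ) * (μ j + v j)
      = (c0 + 2 * ∑ j, (Y j : ℝ) * μ j) + (-(1/2) * (v ⬝ᵥ A *ᵥ v) + (b + w0) ⬝ᵥ v)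
        + (-(1 / 2) * ((v - m) ⬝ᵥ S⁻¹.mulVec (v - m))) := by
    have hs : 2 * ∑ j, (Y j : ℝ) * (μ j + v j)
        = 2 * ∑ j, (Y j : ℝ) * μ j + ∑ j, 2 * (Y j : ℝ) * v j := by
      rw [Finset.mul_sum, Finset.mul_sum]
      rw [← Finset.sum_add_distrib]
      exact Finset.sum_congr rfl fun j _ => by ring
    rw [hwsum, hbv, hs]
    linarith [key v]
  calc K1 ^ 2 * Real.exp (-(v ⬝ᵥ Sig⁻¹ *ᵥ v) + 2 * ∑ j, (Y j : ℝ) * (μ j + v j))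
      = K1 ^ 2 / K2 * K2 * (Real.exp ((c0 + 2 * ∑ j, (Y j : ℝ) * μ j)
          + (-(1/2) * (v ⬝ᵥ A *ᵥ v) + (b + w0) ⬝ᵥ v)
          + (-(1 / 2) * ((v - m) ⬝ᵥ S⁻¹.mulVec (v - m))))) := by
        rw [div_mul_cancel₀ _ hK2pos.ne', hexp]
    _ = K1 ^ 2 / K2 * Real.exp (c0 + 2 * ∑ j, (Y j : ℝ) * μ j) *
          Real.exp (-(1/2) * (v ⬝ᵥ A *ᵥ v) + (b + w0) ⬝ᵥ v) *
          (K2 * Real.exp (-(1 / 2) * ((v - m) ⬝ᵥ S⁻¹.mulVec (v - m)))) := by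
        rw [Real.exp_add, Real.exp_add]
        ring
end

section
/- Let p be a positive natural number, Y ∈ (Fin p → ℕ), μ ∈ (Fin p → ℝ), m ∈ (Fin p → ℝ), and let Σ and S be symmetric positive definite real p×p matrices. If the matrix Σ⁻¹ − S⁻¹ is positive definite, then sup_{v ∈ ℝ^p} p_{Σ,μ}(Y, v) / φ(v; m, S) < ∞, i.e. the function v ↦ p_{Σ,μ}(Y, v) / φ(v; m, S) is bounded above on ℝ^p. -/
open MeasureTheory Real Matrix

lemma pln_sym_dot {p : ℕ} {M : Matrix (Fin p) (Fin p) ℝ} (hM : M.IsHermitian)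
    (x y : Fin p → ℝ) : x ⬝ᵥ M *ᵥ y = y ⬝ᵥ M *ᵥ x := by
  rw [dotProduct_mulVec, ← mulVec_transpose, dotProduct_comm]
  congr 1
  rw [show Mᵀ = M from hM]

lemma pln_quad_bound {p : ℕ} {A : Matrix (Fin p) (Fin p) ℝ} (hA : A.PosDef)
    (b v : Fin p → ℝ) :
    -(1/2) * (v ⬝ᵥ A *ᵥ v) + v ⬝ᵥ b ≤ (1/2) * ((A⁻¹ *ᵥ b) ⬝ᵥ b) := by
  set u := A⁻¹ *ᵥ b with hu
  have hAu : A *ᵥ u = b := by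
    rw [hu, mulVec_mulVec, mul_nonsing_inv _ (isUnit_iff_ne_zero.2 hA.det_pos.ne'), one_mulVec]
  have h0 : 0 ≤ (v - u) ⬝ᵥ A *ᵥ (v - u) := by
    simpa using hA.posSemidef.dotProduct_mulVec_nonneg (v - u)
  have hexp : (v - u) ⬝ᵥ A *ᵥ (v - u)
      = v ⬝ᵥ A *ᵥ v - 2 * (v ⬝ᵥ b) + u ⬝ᵥ b := by
    have h1 : u ⬝ᵥ A *ᵥ v = v ⬝ᵥ b := by
      rw [pln_sym_dot hA.1, hAu]
    have h2 : v ⬝ᵥ A *ᵥ u = v ⬝ᵥ b := by rw [hAu]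
    have h3 : u ⬝ᵥ A *ᵥ u = u ⬝ᵥ b := by rw [hAu]
    rw [mulVec_sub, dotProduct_sub, sub_dotProduct, sub_dotProduct, h1, h2, h3]
    ring
  linarith

theorem pln_is_weights_bounded (p : ℕ) (hp : 0 < p)
    (Y : Fin p → ℕ) (μ : Fin p → ℝ) (m : Fin p → ℝ)
    (Sig S : Matrix (Fin p) (Fin p) ℝ)
    (hSig : Sig.PosDef) (hS : S.PosDef)
    (hcond : (Sig⁻¹ - S⁻¹).PosDef) :
    BddAbove (Set.range fun v : Fin p → ℝ =>
      plnDensity p Sig μ Y v / gaussDensity p m S v) := by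
  set A : Matrix (Fin p) (Fin p) ℝ := Sig⁻¹ - S⁻¹ with hA
  set Yv : Fin p → ℝ := fun j => (Y j : ℝ) with hYv
  set b : Fin p → ℝ := Yv - S⁻¹ *ᵥ m with hb
  set C0 : ℝ := (∑ j, (Y j : ℝ) * μ j) + (1/2) * (m ⬝ᵥ S⁻¹ *ᵥ m) with hC0
  set G : ℝ := (1/2) * ((A⁻¹ *ᵥ b) ⬝ᵥ b) + C0 with hG
  have hSinv : (S⁻¹).IsHermitian := hS.inv.1
  -- positivity of the constants
  have hc : (0:ℝ) < (2 * Real.pi) ^ (-(p : ℝ) / 2) :=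
    Real.rpow_pos_of_pos (by positivity) _
  have hd : (0:ℝ) < Sig.det ^ (-(1:ℝ) / 2) :=
    Real.rpow_pos_of_pos hSig.det_pos _
  have hd' : (0:ℝ) < S.det ^ (-(1:ℝ) / 2) :=
    Real.rpow_pos_of_pos hS.det_pos _
  have hF : (0:ℝ) < ∏ j, (Nat.factorial (Y j) : ℝ) := by
    apply Finset.prod_pos
    intro j _
    exact_mod_cast Nat.factorial_pos (Y j)
  -- the exponent inequality
  have hE : ∀ v : Fin p → ℝ,
      (-(1/2) * (v ⬝ᵥ Sig⁻¹ *ᵥ v)) + (∑ j, (Y j : ℝ) * (μ j + v j))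
        ≤ G + (-(1/2) * ((v - m) ⬝ᵥ S⁻¹ *ᵥ (v - m))) := by
    intro v
    have hq := pln_quad_bound hcond b v
    have hsplit : v ⬝ᵥ A *ᵥ v = v ⬝ᵥ Sig⁻¹ *ᵥ v - v ⬝ᵥ S⁻¹ *ᵥ v := by
      rw [hA, sub_mulVec, dotProduct_sub]
    have hvm : (v - m) ⬝ᵥ S⁻¹ *ᵥ (v - m)
        = v ⬝ᵥ S⁻¹ *ᵥ v - 2 * (v ⬝ᵥ S⁻¹ *ᵥ m) + m ⬝ᵥ S⁻¹ *ᵥ m := by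
      rw [mulVec_sub, dotProduct_sub, sub_dotProduct, sub_dotProduct,
        pln_sym_dot hSinv m v]
      ring
    have hvb : v ⬝ᵥ b = (∑ j, (Y j : ℝ) * v j) - v ⬝ᵥ S⁻¹ *ᵥ m := by
      rw [hb, dotProduct_sub]
      congr 1
      simp [hYv, dotProduct, mul_comm]
    have hsum : ∑ j, (Y j : ℝ) * (μ j + v j)
        = (∑ j, (Y j : ℝ) * μ j) + ∑ j, (Y j : ℝ) * v j := by
      rw [← Finset.sum_add_distrib]; congr 1; ext j; ring
    rw [hsum, hG, hC0]
    rw [hsplit, hvb] at hq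
    rw [hvm]
    linarith
  -- the global bound
  set K : ℝ := Sig.det ^ (-(1:ℝ)/2) / S.det ^ (-(1:ℝ)/2) *
      (∏ j, (Nat.factorial (Y j) : ℝ))⁻¹ * Real.exp G with hK
  refine ⟨K, ?_⟩
  rintro x ⟨v, rfl⟩
  have hgauss : (0:ℝ) < gaussDensity p m S v := by
    unfold gaussDensity
    positivity
  rw [div_le_iff₀ hgauss]
  -- bound the Poisson product
  have hP : (∏ j, Real.exp ((Y j : ℝ) * (μ j + v j) - Real.exp (μ j + v j)) /
        (Nat.factorial (Y j) : ℝ))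
      ≤ Real.exp (∑ j, (Y j : ℝ) * (μ j + v j)) / ∏ j, (Nat.factorial (Y j) : ℝ) := by
    rw [Real.exp_sum, ← Finset.prod_div_distrib]
    apply Finset.prod_le_prod
    · intro j _
      positivity
    · intro j _
      gcongr
      nlinarith [Real.exp_pos (μ j + v j)]
  have step1 : plnDensity p Sig μ Y v
      ≤ (2 * Real.pi) ^ (-(p : ℝ) / 2) * Sig.det ^ (-(1:ℝ)/2) *
        (∏ j, (Nat.factorial (Y j) : ℝ))⁻¹ *
        Real.exp ((-(1/2) * (v ⬝ᵥ Sig⁻¹ *ᵥ v)) + ∑ j, (Y j : ℝ) * (μ j + v j)) := by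
    unfold plnDensity
    calc (2 * Real.pi) ^ (-(p : ℝ) / 2) * Sig.det ^ (-(1 : ℝ) / 2) *
          Real.exp (-(1 / 2) * (v ⬝ᵥ Sig⁻¹.mulVec v)) *
          ∏ j, Real.exp ((Y j : ℝ) * (μ j + v j) - Real.exp (μ j + v j)) /
            (Nat.factorial (Y j) : ℝ)
        ≤ (2 * Real.pi) ^ (-(p : ℝ) / 2) * Sig.det ^ (-(1 : ℝ) / 2) *
          Real.exp (-(1 / 2) * (v ⬝ᵥ Sig⁻¹.mulVec v)) *
          (Real.exp (∑ j, (Y j : ℝ) * (μ j + v j)) / ∏ j, (Nat.factorial (Y j) : ℝ)) := by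
          apply mul_le_mul_of_nonneg_left hP (by positivity)
      _ = (2 * Real.pi) ^ (-(p : ℝ) / 2) * Sig.det ^ (-(1:ℝ)/2) *
          (∏ j, (Nat.factorial (Y j) : ℝ))⁻¹ *
          Real.exp ((-(1/2) * (v ⬝ᵥ Sig⁻¹ *ᵥ v)) + ∑ j, (Y j : ℝ) * (μ j + v j)) := by
          rw [Real.exp_add]
          field_simp
  have step2 : (2 * Real.pi) ^ (-(p : ℝ) / 2) * Sig.det ^ (-(1:ℝ)/2) *
        (∏ j, (Nat.factorial (Y j) : ℝ))⁻¹ *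
        Real.exp ((-(1/2) * (v ⬝ᵥ Sig⁻¹ *ᵥ v)) + ∑ j, (Y j : ℝ) * (μ j + v j))
      ≤ K * gaussDensity p m S v := by
    have hKg : K * gaussDensity p m S v
        = (2 * Real.pi) ^ (-(p : ℝ) / 2) * Sig.det ^ (-(1:ℝ)/2) *
          (∏ j, (Nat.factorial (Y j) : ℝ))⁻¹ *
          Real.exp (G + (-(1/2) * ((v - m) ⬝ᵥ S⁻¹ *ᵥ (v - m)))) := by
      have key : ∀ (d d' F c eG e2 : ℝ), d' ≠ 0 →
          (d / d' * F * eG) * (c * d' * e2) = c * d * F * (eG * e2) := by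
        intros d d' F c eG e2 h
        field_simp
      unfold gaussDensity
      rw [hK]
      conv_rhs => rw [Real.exp_add]
      exact key _ _ _ _ _ _ hd'.ne'
    rw [hKg]
    apply mul_le_mul_of_nonneg_left _ (by positivity)
    exact Real.exp_le_exp.2 (hE v)
  exact step1.trans step2
end

section
/- Let p be a positive natural number, Y ∈ (Fin p → ℕ), μ ∈ (Fin p → ℝ), m ∈ (Fin p → ℝ), α ∈ [0,1), and let Σ and S be symmetric positive definite real p×p matrices. Define the Gaussian mixture proposal density q(v) = α·φ(v; m, S) + (1 − α)·φ(v; m, Σ) for v ∈ ℝ^p. Then the function v ↦ p_{Σ,μ}(Y, v)² / q(v) is Lebesgue-integrable on ℝ^p, i.e. ∫_{ℝ^p} p_{Σ,μ}(Y, v)² / q(v) dv < ∞. -/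
open MeasureTheory Real Matrix

private lemma aux_exp_int (a b : ℝ) (ha : 0 < a) :
    Integrable (fun x : ℝ => Real.exp (-a * x ^ 2 + b * x)) := by
  have h := (integrable_exp_neg_mul_sq ha).comp_sub_right (b / (2 * a))
  have h2 := h.const_mul (Real.exp (b ^ 2 / (4 * a)))
  refine h2.congr (Filter.Eventually.of_forall fun x => ?_)
  show _ = _
  simp only
  rw [← Real.exp_add]
  congr 1
  field_simp
  ring

private lemma aux_pois (n : ℕ) (t : ℝ) :
    (n : ℝ) * t - Real.exp t ≤ (n : ℝ) * Real.log ((n : ℝ) + 1) := by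
  set L := Real.log ((n : ℝ) + 1) with hL
  have hn1 : (0:ℝ) < (n:ℝ) + 1 := by positivity
  have hLe : Real.exp L = (n : ℝ) + 1 := Real.exp_log hn1
  rcases le_or_gt t L with h | h
  · have h1 : (n : ℝ) * t ≤ (n : ℝ) * L := by
      exact mul_le_mul_of_nonneg_left h (Nat.cast_nonneg n)
    have := Real.exp_pos t
    linarith
  · have h1 : (t - L) + 1 ≤ Real.exp (t - L) := Real.add_one_le_exp _
    have h2 : Real.exp t = Real.exp L * Real.exp (t - L) := by
      rw [← Real.exp_add]; ring_nf
    have h3 : ((n:ℝ) + 1) * ((t - L) + 1) ≤ Real.exp t := by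
      rw [h2, hLe]
      exact mul_le_mul_of_nonneg_left h1 (le_of_lt hn1)
    nlinarith [n.cast_nonneg (α := ℝ)]

private lemma aux_quad_lb {p : ℕ} (hp : 0 < p) (A : Matrix (Fin p) (Fin p) ℝ)
    (hA : A.PosDef) : ∃ c > 0, ∀ v : Fin p → ℝ, c * ∑ i, v i ^ 2 ≤ v ⬝ᵥ A *ᵥ v := by
  have hcont : Continuous fun v : Fin p → ℝ => v ⬝ᵥ A *ᵥ v :=
    continuous_id.dotProduct (continuous_const.matrix_mulVec continuous_id)
  have hsne : (Metric.sphere (0 : Fin p → ℝ) 1).Nonempty := by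
    haveI : Nontrivial (Fin p → ℝ) := by
      have : Nonempty (Fin p) := ⟨⟨0, hp⟩⟩
      infer_instance
    exact NormedSpace.sphere_nonempty.2 zero_le_one
  obtain ⟨v₀, hv₀mem, hv₀min⟩ :=
    (isCompact_sphere (0 : Fin p → ℝ) 1).exists_isMinOn hsne hcont.continuousOn
  have hv₀norm : ‖v₀‖ = 1 := by simpa using hv₀mem
  have hv₀ne : v₀ ≠ 0 := by
    intro h; rw [h] at hv₀norm; simp at hv₀norm
  have hc0 : 0 < v₀ ⬝ᵥ A *ᵥ v₀ := (posDef_iff_dotProduct_mulVec.mp hA).2 hv₀ne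
  set c₀ := v₀ ⬝ᵥ A *ᵥ v₀ with hc₀
  have hlow : ∀ v : Fin p → ℝ, c₀ * ‖v‖ ^ 2 ≤ v ⬝ᵥ A *ᵥ v := by
    intro v
    rcases eq_or_ne v 0 with rfl | hv
    · simp
    · have hnv : (0:ℝ) < ‖v‖ := norm_pos_iff.2 hv
      set u := ‖v‖⁻¹ • v with hu
      have hum : u ∈ Metric.sphere (0 : Fin p → ℝ) 1 := by
        simp [hu, norm_smul, abs_of_pos (inv_pos.2 hnv), inv_mul_cancel₀ (ne_of_gt hnv)]
      have hmin := hv₀min hum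
      have hscale : u ⬝ᵥ A *ᵥ u = (‖v‖⁻¹)^2 * (v ⬝ᵥ A *ᵥ v) := by
        rw [hu]
        rw [Matrix.mulVec_smul, smul_dotProduct, dotProduct_smul]
        simp [smul_eq_mul]; ring
      have : c₀ ≤ (‖v‖⁻¹)^2 * (v ⬝ᵥ A *ᵥ v) := by
        simpa [hscale] using hmin
      have h2 := mul_le_mul_of_nonneg_left this (le_of_lt (pow_pos hnv 2))
      calc c₀ * ‖v‖ ^ 2 = ‖v‖^2 * c₀ := by ring
        _ ≤ ‖v‖^2 * ((‖v‖⁻¹)^2 * (v ⬝ᵥ A *ᵥ v)) := h2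
        _ = v ⬝ᵥ A *ᵥ v := by field_simp
  refine ⟨c₀ / p, by positivity, fun v => ?_⟩
  have hsum : ∑ i, v i ^ 2 ≤ p * ‖v‖ ^ 2 := by
    calc ∑ i, v i ^ 2 ≤ ∑ _i : Fin p, ‖v‖ ^ 2 := by
          refine Finset.sum_le_sum fun i _ => ?_
          have : |v i| ≤ ‖v‖ := by
            simpa using norm_le_pi_norm v i
          nlinarith [abs_nonneg (v i), sq_abs (v i)]
      _ = p * ‖v‖ ^ 2 := by simp [Finset.sum_const, mul_comm]
  have hppos : (0:ℝ) < p := by exact_mod_cast hp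
  calc c₀ / p * ∑ i, v i ^ 2 ≤ c₀ / p * (p * ‖v‖^2) := by
        exact mul_le_mul_of_nonneg_left hsum (by positivity)
    _ = c₀ * ‖v‖^2 := by field_simp
    _ ≤ v ⬝ᵥ A *ᵥ v := hlow v

set_option maxHeartbeats 1000000 in
theorem pln_mixture_weights_finite_variance (p : ℕ) (hp : 0 < p)
    (Y : Fin p → ℕ) (μ : Fin p → ℝ) (m : Fin p → ℝ)
    (α : ℝ) (hα0 : 0 ≤ α) (hα1 : α < 1)
    (Sig S : Matrix (Fin p) (Fin p) ℝ)
    (hSig : Sig.PosDef) (hS : S.PosDef) :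
    Integrable (fun v : Fin p → ℝ =>
      (plnDensity p Sig μ Y v) ^ 2 /
        (α * gaussDensity p m S v + (1 - α) * gaussDensity p m Sig v)) volume := by
  have h1α : (0:ℝ) < 1 - α := by linarith
  have hA : (Sig⁻¹).PosDef := hSig.inv
  obtain ⟨c, hc, hquad⟩ := aux_quad_lb hp Sig⁻¹ hA
  -- symmetry facts
  have hAsymm : (Sig⁻¹)ᵀ = Sig⁻¹ := by
    have := hA.1
    rwa [Matrix.IsHermitian, conjTranspose_eq_transpose_of_trivial] at this
  have hsy : ∀ v : Fin p → ℝ, m ⬝ᵥ Sig⁻¹ *ᵥ v = (Sig⁻¹ *ᵥ m) ⬝ᵥ v := by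
    intro v
    rw [Matrix.dotProduct_mulVec, ← Matrix.vecMul_transpose, hAsymm]
  have hexpand : ∀ v : Fin p → ℝ,
      (v - m) ⬝ᵥ Sig⁻¹ *ᵥ (v - m)
        = v ⬝ᵥ Sig⁻¹ *ᵥ v - 2 * ((Sig⁻¹ *ᵥ m) ⬝ᵥ v) + m ⬝ᵥ Sig⁻¹ *ᵥ m := by
    intro v
    rw [Matrix.mulVec_sub, dotProduct_sub, sub_dotProduct,
      sub_dotProduct, dotProduct_comm v (Sig⁻¹ *ᵥ m), hsy v]
    ring
  -- constants
  set K₀ : ℝ := (2 * Real.pi) ^ (-(p : ℝ) / 2) * Sig.det ^ (-(1 : ℝ) / 2) with hK₀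
  have hK₀pos : 0 < K₀ :=
    mul_pos (Real.rpow_pos_of_pos (by positivity) _) (Real.rpow_pos_of_pos hSig.det_pos _)
  set K₁ : ℝ := ∏ j, Real.exp ((Y j : ℝ) * Real.log ((Y j : ℝ) + 1)) with hK₁
  have hK₁pos : 0 < K₁ := Finset.prod_pos fun j _ => Real.exp_pos _
  set M : ℝ := m ⬝ᵥ Sig⁻¹ *ᵥ m with hM
  set b : Fin p → ℝ := -(Sig⁻¹ *ᵥ m) with hb
  set C : ℝ := K₀ * K₁ ^ 2 * Real.exp (M / 2) / (1 - α) with hC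
  have hCpos : 0 < C := by positivity
  set g : (Fin p → ℝ) → ℝ :=
    fun v => C * ∏ i, Real.exp (-(c / 2) * v i ^ 2 + b i * v i) with hg
  -- the bound function is integrable
  have hgInt : Integrable g volume := by
    have := (Integrable.fintype_prod (E := ℝ)
      (f := fun i (x : ℝ) => Real.exp (-(c / 2) * x ^ 2 + b i * x))
      (fun i => aux_exp_int (c / 2) (b i) (by positivity)))
    exact this.const_mul C
  -- positivity of gaussian densities
  have hgaussSpos : ∀ v, 0 < gaussDensity p m S v := fun v =>
    mul_pos (mul_pos (Real.rpow_pos_of_pos (by positivity) _)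
      (Real.rpow_pos_of_pos hS.det_pos _)) (Real.exp_pos _)
  have hgaussSigpos : ∀ v, 0 < gaussDensity p m Sig v := fun v =>
    mul_pos (mul_pos (Real.rpow_pos_of_pos (by positivity) _)
      (Real.rpow_pos_of_pos hSig.det_pos _)) (Real.exp_pos _)
  have hqpos : ∀ v, 0 < α * gaussDensity p m S v + (1 - α) * gaussDensity p m Sig v := by
    intro v
    have h1 : 0 ≤ α * gaussDensity p m S v := mul_nonneg hα0 (hgaussSpos v).le
    have h2 : 0 < (1 - α) * gaussDensity p m Sig v := mul_pos h1α (hgaussSigpos v)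
    linarith
  have hqge : ∀ v, (1 - α) * gaussDensity p m Sig v
      ≤ α * gaussDensity p m S v + (1 - α) * gaussDensity p m Sig v := by
    intro v
    have h1 : 0 ≤ α * gaussDensity p m S v := mul_nonneg hα0 (hgaussSpos v).le
    linarith
  -- continuity / measurability of the integrand
  have hcontPln : Continuous (plnDensity p Sig μ Y) := by
    unfold plnDensity
    refine Continuous.mul (Continuous.mul continuous_const ?_) ?_
    · exact Real.continuous_exp.comp (continuous_const.mul
        (continuous_id.dotProduct (continuous_const.matrix_mulVec continuous_id)))
    · refine continuous_finset_prod _ fun j _ => Continuous.div_const ?_ _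
      exact Real.continuous_exp.comp
        ((continuous_const.mul (continuous_const.add (continuous_apply j))).sub
          (Real.continuous_exp.comp (continuous_const.add (continuous_apply j))))
  have hcontGauss : ∀ (T : Matrix (Fin p) (Fin p) ℝ), Continuous (gaussDensity p m T) := by
    intro T
    unfold gaussDensity
    refine Continuous.mul continuous_const ?_
    have hsub : Continuous fun v : Fin p → ℝ => v - m := continuous_id.sub continuous_const
    exact Real.continuous_exp.comp
      (continuous_const.mul (hsub.dotProduct (continuous_const.matrix_mulVec hsub)))
  have hmeas : AEStronglyMeasurable (fun v : Fin p → ℝ =>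
      (plnDensity p Sig μ Y v) ^ 2 /
        (α * gaussDensity p m S v + (1 - α) * gaussDensity p m Sig v)) volume := by
    refine Continuous.aestronglyMeasurable ?_
    exact ((hcontPln.pow 2).div
      ((continuous_const.mul (hcontGauss S)).add (continuous_const.mul (hcontGauss Sig)))
      fun v => (hqpos v).ne')
  -- key pointwise bound
  have key : ∀ v : Fin p → ℝ, plnDensity p Sig μ Y v ^ 2
      ≤ g v * ((1 - α) * gaussDensity p m Sig v) := by
    intro v
    set Q : ℝ := v ⬝ᵥ Sig⁻¹ *ᵥ v with hQ
    set Qm : ℝ := (v - m) ⬝ᵥ Sig⁻¹ *ᵥ (v - m) with hQm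
    set P : ℝ := ∏ j, Real.exp ((Y j : ℝ) * (μ j + v j) - Real.exp (μ j + v j)) /
      (Nat.factorial (Y j) : ℝ) with hP
    have hP0 : 0 ≤ P :=
      Finset.prod_nonneg fun j _ => div_nonneg (Real.exp_pos _).le (Nat.cast_nonneg _)
    have hPle : P ≤ K₁ := by
      refine Finset.prod_le_prod (fun j _ =>
        div_nonneg (Real.exp_pos _).le (Nat.cast_nonneg _)) (fun j _ => ?_)
      have hfac : (1:ℝ) ≤ (Nat.factorial (Y j) : ℝ) := by
        exact_mod_cast (Y j).factorial_pos
      calc Real.exp ((Y j : ℝ) * (μ j + v j) - Real.exp (μ j + v j)) / (Nat.factorial (Y j) : ℝ)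
          ≤ Real.exp ((Y j : ℝ) * (μ j + v j) - Real.exp (μ j + v j)) := by
            apply div_le_self (Real.exp_pos _).le hfac
        _ ≤ Real.exp ((Y j : ℝ) * Real.log ((Y j : ℝ) + 1)) :=
            Real.exp_le_exp.2 (aux_pois (Y j) (μ j + v j))
    have hplneq : plnDensity p Sig μ Y v = K₀ * Real.exp (-(1/2) * Q) * P := rfl
    -- exponent inequality
    have hT : ∑ i, (-(c / 2) * v i ^ 2 + b i * v i)
        = -(c/2) * (∑ i, v i ^ 2) + b ⬝ᵥ v := by
      rw [Finset.sum_add_distrib, ← Finset.mul_sum]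
      rfl
    have hbv : b ⬝ᵥ v = -((Sig⁻¹ *ᵥ m) ⬝ᵥ v) := by
      rw [hb, neg_dotProduct]
    have hexp : -Q ≤ M / 2 + (∑ i, (-(c / 2) * v i ^ 2 + b i * v i)) - (1/2) * Qm := by
      rw [hT, hbv]
      have h1 : c * ∑ i, v i ^ 2 ≤ Q := hquad v
      have h2 : Qm = Q - 2 * ((Sig⁻¹ *ᵥ m) ⬝ᵥ v) + M := hexpand v
      rw [h2]
      ring_nf
      nlinarith [h1]
    have hE2 : Real.exp (-(1/2) * Q) ^ 2 = Real.exp (-Q) := by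
      rw [← Real.exp_nat_mul]
      congr 1
      push_cast
      ring
    set T : ℝ := ∑ i, (-(c / 2) * v i ^ 2 + b i * v i) with hTd
    have hgv : g v = C * Real.exp T := by
      rw [hg]
      simp only
      rw [hTd, Real.exp_sum]
    have hGv : gaussDensity p m Sig v = K₀ * Real.exp (-(1/2) * Qm) := by
      rw [hK₀, hQm]; rfl
    have hsq : P ^ 2 ≤ K₁ ^ 2 := by nlinarith
    calc plnDensity p Sig μ Y v ^ 2
        = K₀ ^ 2 * Real.exp (-Q) * P ^ 2 := by rw [hplneq, ← hE2]; ring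
      _ ≤ K₀ ^ 2 * Real.exp (-Q) * K₁ ^ 2 := by
          have hnn : 0 ≤ K₀ ^ 2 * Real.exp (-Q) := by positivity
          exact mul_le_mul_of_nonneg_left hsq hnn
      _ ≤ K₀ ^ 2 * Real.exp (M / 2 + T - (1/2) * Qm) * K₁ ^ 2 := by
          have h := Real.exp_le_exp.2 hexp
          have hnn : 0 ≤ K₀ ^ 2 := sq_nonneg K₀
          have hnn2 : 0 ≤ K₁ ^ 2 := sq_nonneg K₁
          exact mul_le_mul_of_nonneg_right (mul_le_mul_of_nonneg_left h hnn) hnn2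
      _ = g v * ((1 - α) * gaussDensity p m Sig v) := by
          rw [hgv, hGv, hC]
          rw [show M / 2 + T - (1/2) * Qm = M/2 + (T + -(1/2) * Qm) by ring,
            Real.exp_add, Real.exp_add]
          field_simp
  refine Integrable.mono' hgInt hmeas (Filter.Eventually.of_forall fun v => ?_)
  have hfnn : 0 ≤ plnDensity p Sig μ Y v ^ 2 /
      (α * gaussDensity p m S v + (1 - α) * gaussDensity p m Sig v) :=
    div_nonneg (sq_nonneg _) (hqpos v).le
  rw [Real.norm_of_nonneg hfnn]
  rw [div_le_iff₀ (hqpos v)]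
  have hgnn : 0 ≤ g v := by
    rw [hg]
    exact mul_nonneg hCpos.le (Finset.prod_nonneg fun i _ => (Real.exp_pos _).le)
  calc plnDensity p Sig μ Y v ^ 2 ≤ g v * ((1 - α) * gaussDensity p m Sig v) := key v
    _ ≤ g v * (α * gaussDensity p m S v + (1 - α) * gaussDensity p m Sig v) :=
        mul_le_mul_of_nonneg_left (hqge v) hgnn
end
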